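/- arXiv:1501.05404 — 2 statements merged into one kernel-verified Lean document; each statement's English description precedes it below -/
import Mathlib

section
/- Let X be a Hausdorff uniform space and let μ be a continuous linear functional on the Banach space UCb(X) of bounded uniformly continuous complex-valued functions on X with the supremum norm. If ⟨μ, e^{if}⟩ = 0 for every uniformly continuous function f : X → ℝ, then μ = 0. (Equivalently: the Fourier transform F : M(X) → ℓ^∞(UC(X,ℝ)), (Fμ)(f) = ⟨μ, e^{if}⟩, is injective.) -/
open Complex

noncomputable section

/-- The function `t ↦ e^{it}` is uniformly continuous on `ℝ`. -/
lemma uniformContinuous_exp_mul_I :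
    UniformContinuous fun t : ℝ => Complex.exp (t * Complex.I) := by
  rw [Metric.uniformContinuous_iff]
  intro ε hε
  refine ⟨min 1 (ε / 2), by positivity, fun {a b} h => ?_⟩
  have hab1 : |a - b| ≤ 1 := by
    have := (lt_min_iff.mp (by simpa [Real.dist_eq] using h)).1
    linarith [abs_nonneg (a - b), this]
  have key : ‖Complex.exp ((↑(a - b)) * Complex.I) - 1‖ ≤ 2 * |a - b| := by
    have h1 : ‖(↑(a - b) : ℂ) * Complex.I‖ = |a - b| := by
      rw [norm_mul, Complex.norm_I, mul_one, Complex.norm_real, Real.norm_eq_abs]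
    have h2 := Complex.norm_exp_sub_one_le (x := (↑(a - b)) * Complex.I)
      (by rw [h1]; exact hab1)
    rw [h1] at h2
    exact h2
  have hfactor : Complex.exp (↑a * Complex.I) - Complex.exp (↑b * Complex.I)
      = Complex.exp (↑b * Complex.I) * (Complex.exp ((↑(a - b)) * Complex.I) - 1) := by
    rw [mul_sub, mul_one, ← Complex.exp_add]
    push_cast
    ring_nf
  have habε : |a - b| < ε / 2 := by
    have := (lt_min_iff.mp (by simpa [Real.dist_eq] using h)).2
    exact this
  calc dist (Complex.exp (↑a * Complex.I)) (Complex.exp (↑b * Complex.I))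
      = ‖Complex.exp (↑a * Complex.I) - Complex.exp (↑b * Complex.I)‖ := by
        rw [Complex.dist_eq]
    _ = ‖Complex.exp (↑b * Complex.I)‖ *
          ‖Complex.exp ((↑(a - b)) * Complex.I) - 1‖ := by
        rw [hfactor, norm_mul]
    _ ≤ 2 * |a - b| := by
        rw [Complex.norm_exp_ofReal_mul_I, one_mul]; exact key
    _ < ε := by linarith

variable (X : Type*) [UniformSpace X]

/-- The space `UCb(X)` of bounded uniformly continuous complex-valued functions on a
uniform space `X`, realized as a (closed) subspace of the Banach space of bounded
continuous functions, so that it is itself a Banach space with the supremum norm. -/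
def UCb : Submodule ℂ (BoundedContinuousFunction X ℂ) where
  carrier := {f | UniformContinuous f}
  add_mem' := by
    intro f g hf hg
    exact ((hf : UniformContinuous f).add (hg : UniformContinuous g))
  zero_mem' := by
    exact (uniformContinuous_const : UniformContinuous fun _ : X => (0 : ℂ))
  smul_mem' := by
    intro c f hf
    exact ((hf : UniformContinuous f).const_smul c)

variable {X}

/-- For a uniformly continuous function `f : X → ℝ`, the element `e^{if}` of `UCb(X)`. -/
def expICf {f : X → ℝ} (hf : UniformContinuous f) : UCb X :=
  ⟨BoundedContinuousFunction.ofNormedAddCommGroup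
      (fun x => Complex.exp ((f x : ℂ) * Complex.I))
      ((uniformContinuous_exp_mul_I.comp hf).continuous) 1
      (fun x => le_of_eq (Complex.norm_exp_ofReal_mul_I (f x))),
   by exact (uniformContinuous_exp_mul_I.comp hf)⟩

/-- A real-valued bounded uniformly continuous function as an element of `UCb X`. -/
def ucbOfReal {X : Type*} [UniformSpace X] {f : X → ℝ} (hf : UniformContinuous f)
    (C : ℝ) (hC : ∀ x, |f x| ≤ C) : UCb X :=
  ⟨BoundedContinuousFunction.ofNormedAddCommGroup (fun x => (f x : ℂ))
      (Complex.continuous_ofReal.comp hf.continuous) C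
      (fun x => by simpa using hC x),
   by exact (Complex.isometry_ofReal.uniformContinuous.comp hf)⟩

lemma mu_real_eq_zero {X : Type*} [UniformSpace X] (μ : UCb X →L[ℂ] ℂ)
    (h : ∀ (f : X → ℝ) (hf : UniformContinuous f), μ (expICf hf) = 0)
    {f : X → ℝ} (hf : UniformContinuous f) (C : ℝ) (hC0 : 0 ≤ C)
    (hC : ∀ x, |f x| ≤ C) :
    μ (ucbOfReal hf C hC) = 0 := by
  have h0 : UniformContinuous (fun _ : X => (0 : ℝ)) := uniformContinuous_const
  set F := ucbOfReal hf C hC with hF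
  have key : ∀ t : ℝ, |t| * C ≤ 1 →
      ‖(expICf (hf.const_smul t) - expICf h0 - (((t : ℂ) * Complex.I) • F) : UCb X)‖
        ≤ (|t| * C) ^ 2 := by
    intro t ht
    have hnorm : ‖(expICf (hf.const_smul t) - expICf h0 - (((t : ℂ) * Complex.I) • F) : UCb X)‖
        = ‖((expICf (hf.const_smul t) : BoundedContinuousFunction X ℂ)
            - (expICf h0 : BoundedContinuousFunction X ℂ)
            - ((t : ℂ) * Complex.I) • (F : BoundedContinuousFunction X ℂ))‖ := by
      norm_cast
    rw [hnorm]
    apply BoundedContinuousFunction.norm_le (by positivity) |>.mpr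
    intro x
    have hx : ((expICf (hf.const_smul t) : BoundedContinuousFunction X ℂ)
            - (expICf h0 : BoundedContinuousFunction X ℂ)
            - ((t : ℂ) * Complex.I) • (F : BoundedContinuousFunction X ℂ)) x
        = Complex.exp (((t * f x : ℝ) : ℂ) * Complex.I) - 1
            - (((t * f x : ℝ) : ℂ) * Complex.I) := by
      rw [hF]
      simp only [Complex.exp_zero, BoundedContinuousFunction.coe_sub, BoundedContinuousFunction.coe_smul,
        Pi.sub_apply, Pi.smul_apply, expICf, ucbOfReal,
        BoundedContinuousFunction.coe_ofNormedAddCommGroup, smul_eq_mul]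
      push_cast
      rw [show ((0:ℂ)) * Complex.I = 0 by ring, Complex.exp_zero]
      ring
    rw [hx]
    have hz : ‖(((t * f x : ℝ) : ℂ)) * Complex.I‖ = |t| * |f x| := by
      simp [abs_mul]
    have hz1 : ‖(((t * f x : ℝ) : ℂ)) * Complex.I‖ ≤ 1 := by
      rw [hz]
      calc |t| * |f x| ≤ |t| * C := by
              exact mul_le_mul_of_nonneg_left (hC x) (abs_nonneg t)
        _ ≤ 1 := ht
    have := Complex.norm_exp_sub_one_sub_id_le hz1
    calc ‖Complex.exp (((t * f x : ℝ) : ℂ) * Complex.I) - 1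
            - (((t * f x : ℝ) : ℂ) * Complex.I)‖
        ≤ ‖(((t * f x : ℝ) : ℂ)) * Complex.I‖ ^ 2 := this
      _ ≤ (|t| * C) ^ 2 := by
          rw [hz]
          apply pow_le_pow_left₀ (by positivity)
          exact mul_le_mul_of_nonneg_left (hC x) (abs_nonneg t)
  have hbound : ∀ t : ℝ, |t| * C ≤ 1 → |t| * ‖μ F‖ ≤ ‖μ‖ * (|t| * C) ^ 2 := by
    intro t ht
    have h1 : μ (expICf (hf.const_smul t)) = 0 := h _ _
    have h2 : μ (expICf h0) = 0 := h _ _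
    have hμ : μ (expICf (hf.const_smul t) - expICf h0 - (((t : ℂ) * Complex.I) • F))
        = -(((t : ℂ) * Complex.I) * μ F) := by
      simp [h1, h2]
    have := (μ.le_opNorm (expICf (hf.const_smul t) - expICf h0
        - (((t : ℂ) * Complex.I) • F))).trans
      (mul_le_mul_of_nonneg_left (key t ht) (norm_nonneg μ))
    rw [hμ] at this
    calc |t| * ‖μ F‖
        = ‖-(((t : ℂ) * Complex.I) * μ F)‖ := by
          simp [Complex.norm_real]
      _ ≤ ‖μ‖ * (|t| * C) ^ 2 := this
  by_contra hne
  have hc : 0 < ‖μ F‖ := by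
    simpa [norm_pos_iff] using hne
  set c := ‖μ F‖
  set K := ‖μ‖ * C ^ 2 with hK
  have hK0 : 0 ≤ K := by positivity
  set t := min (c / (2 * (K + 1))) (1 / (C + 1)) with htdef
  have ht0 : 0 < t := by
    apply lt_min <;> positivity
  have htC : |t| * C ≤ 1 := by
    rw [abs_of_pos ht0]
    have h1 : t ≤ 1 / (C + 1) := min_le_right _ _
    have : t * C ≤ (1 / (C + 1)) * C := mul_le_mul_of_nonneg_right h1 hC0
    calc t * C ≤ (1 / (C + 1)) * C := this
      _ ≤ 1 := by
          rw [div_mul_eq_mul_div, one_mul, div_le_one (by positivity)]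
          linarith
  have hb := hbound t htC
  rw [abs_of_pos ht0] at hb
  have ht2 : t ≤ c / (2 * (K + 1)) := min_le_left _ _
  have : t * c ≤ ‖μ‖ * (t * C) ^ 2 := hb
  have hlt : ‖μ‖ * (t * C) ^ 2 < t * c := by
    have hexp : ‖μ‖ * (t * C) ^ 2 = t * (K * t) := by rw [hK]; ring
    rw [hexp]
    apply mul_lt_mul_of_pos_left _ ht0
    calc K * t ≤ K * (c / (2 * (K + 1))) :=
          mul_le_mul_of_nonneg_left ht2 hK0
      _ < c := by
          rw [mul_div_assoc']
          rw [div_lt_iff₀ (by positivity)]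
          nlinarith
  linarith

/-- If a continuous linear functional `μ` on `UCb(X)` (i.e. a generalized measure
`μ ∈ M(X)`) satisfies `⟨μ, e^{if}⟩ = 0` for every uniformly continuous `f : X → ℝ`,
then `μ = 0`; that is, the Fourier transform on `M(X)` is injective. -/
theorem fourier_transform_injective {X : Type*} [UniformSpace X] [T2Space X]
    (μ : UCb X →L[ℂ] ℂ)
    (h : ∀ (f : X → ℝ) (hf : UniformContinuous f), μ (expICf hf) = 0) :
    μ = 0 := by
  ext g
  have hG : UniformContinuous ⇑(g : BoundedContinuousFunction X ℂ) := g.2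
  set G := (g : BoundedContinuousFunction X ℂ) with hGdef
  have hu : UniformContinuous fun x => (G x).re := Complex.reCLM.uniformContinuous.comp hG
  have hv : UniformContinuous fun x => (G x).im := Complex.imCLM.uniformContinuous.comp hG
  have hCu : ∀ x, |(G x).re| ≤ ‖G‖ := fun x =>
    (Complex.abs_re_le_norm _).trans (G.norm_coe_le_norm x)
  have hCv : ∀ x, |(G x).im| ≤ ‖G‖ := fun x =>
    (Complex.abs_im_le_norm _).trans (G.norm_coe_le_norm x)
  have hg : g = ucbOfReal hu ‖G‖ hCu + Complex.I • ucbOfReal hv ‖G‖ hCv := by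
    apply Subtype.ext
    ext x
    simp only [Submodule.coe_add, SetLike.val_smul, BoundedContinuousFunction.coe_add,
      BoundedContinuousFunction.coe_smul, Pi.add_apply, Pi.smul_apply, ucbOfReal,
      BoundedContinuousFunction.coe_ofNormedAddCommGroup, smul_eq_mul]
    rw [mul_comm]
    exact (Complex.re_add_im (G x)).symm
  rw [hg]
  have h1 := mu_real_eq_zero μ h hu ‖G‖ (norm_nonneg G) hCu
  have h2 := mu_real_eq_zero μ h hv ‖G‖ (norm_nonneg G) hCv
  simp [h1, h2]

end
end

section
/- Let X be a Hausdorff uniform space and μ ∈ M⁺(X) a positive continuous linear functional on UCb(X). Then the Fourier transform Fμ is a bounded uniformly continuous function on X^∇ (the space UC(X,ℝ) with the uniform structure of pointwise convergence) if and only if the real part Re(Fμ) is continuous at the zero function 0 ∈ X^∇. -/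
open Complex

noncomputable section

variable (X : Type*) [UniformSpace X]

variable {X}

/-- The constant function `1` as an element of `UCb(X)`. -/
def oneUCb : UCb X :=
  ⟨BoundedContinuousFunction.const X (1 : ℂ), by
    exact (uniformContinuous_const : UniformContinuous fun _ : X => (1 : ℂ))⟩

/-- A functional `μ ∈ M(X) = UCb(X)'` is positive if it takes nonnegative (real) values
on nonnegative real-valued functions. -/
def IsPositiveFunctional {X : Type*} [UniformSpace X] (μ : UCb X →L[ℂ] ℂ) : Prop :=
  ∀ g : UCb X, (∀ x : X, ∃ r : ℝ, 0 ≤ r ∧ (g : BoundedContinuousFunction X ℂ) x = r) →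
    ∃ c : ℝ, 0 ≤ c ∧ μ g = c

/-- The uniform space dual `X^∇ = UC(X,ℝ)`, endowed with the uniform structure of
pointwise convergence (as a uniform subspace of the product `ℝ^X`). -/
def UCdual (X : Type*) [UniformSpace X] : Type _ := {f : X → ℝ // UniformContinuous f}

instance (X : Type*) [UniformSpace X] : UniformSpace (UCdual X) :=
  instUniformSpaceSubtype


section Aux

variable {X : Type*} [UniformSpace X]

/-- Composition of an element of `UCb X` with a norm-nonincreasing uniformly continuous map. -/
def compUCb (φ : ℂ → ℂ) (hφ : UniformContinuous φ) (hb : ∀ z, ‖φ z‖ ≤ ‖z‖) (v : UCb X) :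
    UCb X :=
  ⟨BoundedContinuousFunction.ofNormedAddCommGroup (fun x => φ (v.1 x))
    (hφ.continuous.comp v.1.continuous) ‖v.1‖
    (fun x => (hb _).trans (v.1.norm_coe_le_norm x)),
   hφ.comp v.2⟩

def reUCb (v : UCb X) : UCb X :=
  compUCb (fun z => (z.re : ℂ))
    (Complex.isometry_ofReal.uniformContinuous.comp Complex.reCLM.uniformContinuous)
    (fun z => by simpa using Complex.abs_re_le_norm z) v

def imUCb (v : UCb X) : UCb X :=
  compUCb (fun z => (z.im : ℂ))
    (Complex.isometry_ofReal.uniformContinuous.comp Complex.imCLM.uniformContinuous)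
    (fun z => by simpa using Complex.abs_im_le_norm z) v

@[simp] lemma reUCb_apply (v : UCb X) (x : X) : (reUCb v).1 x = ((v.1 x).re : ℂ) := by
  simp [reUCb, compUCb]

@[simp] lemma imUCb_apply (v : UCb X) (x : X) : (imUCb v).1 x = ((v.1 x).im : ℂ) := by
  simp [imUCb, compUCb]

@[simp] lemma oneUCb_apply (x : X) : (oneUCb : UCb X).1 x = 1 := rfl

@[simp] lemma expICf_apply {f : X → ℝ} (hf : UniformContinuous f) (x : X) :
    (expICf hf).1 x = Complex.exp ((f x : ℂ) * Complex.I) := by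
  simp [expICf]

variable {μ : UCb X →L[ℂ] ℂ}

lemma mu_nonneg (hμ : IsPositiveFunctional μ) (v : UCb X) (h : ∀ x, 0 ≤ (v.1 x).re ∧ (v.1 x).im = 0) :
    0 ≤ (μ v).re ∧ (μ v).im = 0 := by
  obtain ⟨c, hc, he⟩ := hμ v (fun x => ⟨(v.1 x).re, (h x).1, by
    apply Complex.ext <;> simp [(h x).2]⟩)
  rw [he]; simpa using hc

lemma mu_real (hμ : IsPositiveFunctional μ) (v : UCb X) (h : ∀ x, (v.1 x).im = 0) : (μ v).im = 0 := by
  have h1 := mu_nonneg hμ (v + (‖v.1‖ : ℂ) • oneUCb) (fun x => by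
    constructor
    · have := Complex.abs_re_le_norm (v.1 x)
      have h2 := v.1.norm_coe_le_norm x
      simp only [Submodule.coe_add, Submodule.coe_smul, BoundedContinuousFunction.coe_add,
        Pi.add_apply, BoundedContinuousFunction.coe_smul, Pi.smul_apply, oneUCb_apply,
        smul_eq_mul, mul_one, Complex.add_re, Complex.ofReal_re]
      have := abs_le.mp (this.trans h2)
      linarith [this.1]
    · simp [h x])
  have h3 := mu_nonneg hμ (oneUCb : UCb X) (fun x => by simp)
  have h4 : μ (v + (‖v.1‖ : ℂ) • oneUCb) = μ v + (‖v.1‖ : ℂ) * μ oneUCb := by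
    simp [map_add, map_smul, smul_eq_mul]
  rw [h4] at h1
  have := h1.2
  simp only [Complex.add_im, Complex.mul_im, Complex.ofReal_re, Complex.ofReal_im,
    h3.2, mul_zero, zero_mul, add_zero] at this
  linarith

lemma mu_mono (hμ : IsPositiveFunctional μ) (v w : UCb X) (hv : ∀ x, (v.1 x).im = 0) (hw : ∀ x, (w.1 x).im = 0)
    (hle : ∀ x, (v.1 x).re ≤ (w.1 x).re) : (μ v).re ≤ (μ w).re := by
  have h1 := mu_nonneg hμ (w - v) (fun x => by
    constructor
    · simp only [Submodule.coe_sub, BoundedContinuousFunction.coe_sub, Pi.sub_apply,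
        Complex.sub_re, sub_nonneg]
      exact hle x
    · simp [Complex.sub_im, hv x, hw x])
  have h2 : μ (w - v) = μ w - μ v := by simp [map_sub]
  rw [h2] at h1
  have := h1.1
  simp only [Complex.sub_re, sub_nonneg] at this
  exact this

lemma mu_re_eq (hμ : IsPositiveFunctional μ) (v : UCb X) : (μ v).re = (μ (reUCb v)).re := by
  have hdec : v = reUCb v + Complex.I • imUCb v := by
    apply Subtype.ext
    apply BoundedContinuousFunction.ext
    intro x
    have : ((reUCb v + Complex.I • imUCb v : UCb X) : BoundedContinuousFunction X ℂ) x
        = ((v.1 x).re : ℂ) + Complex.I * ((v.1 x).im : ℂ) := by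
      simp [smul_eq_mul]
    rw [this]
    rw [mul_comm]
    exact (Complex.re_add_im (v.1 x)).symm
  have him := mu_real hμ (imUCb v) (fun x => by simp)
  conv_lhs => rw [hdec]
  rw [map_add, map_smul]
  simp [Complex.add_re, Complex.mul_re, him]

lemma mu_norm_le (hμ : IsPositiveFunctional μ) (u b : UCb X) (hb : ∀ x, (b.1 x).im = 0)
    (hub : ∀ x, ‖u.1 x‖ ≤ (b.1 x).re) : ‖μ u‖ ≤ (μ b).re := by
  have hbpos : ∀ x, (0:ℝ) ≤ (b.1 x).re := fun x => (norm_nonneg _).trans (hub x)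
  by_cases hz : μ u = 0
  · rw [hz, norm_zero]
    exact (mu_nonneg hμ b (fun x => ⟨hbpos x, hb x⟩)).1
  · set c : ℂ := (‖μ u‖ : ℂ) / (μ u) with hc
    have hcu : μ (c • u) = (‖μ u‖ : ℂ) := by
      rw [map_smul, smul_eq_mul, hc, div_mul_cancel₀]
      exact hz
    have hcn : ‖c‖ = 1 := by
      rw [hc, norm_div, Complex.norm_real, norm_norm,
        div_self (norm_ne_zero_iff.mpr hz)]
    have key : ‖μ u‖ = (μ (reUCb (c • u))).re := by
      rw [← mu_re_eq hμ]
      rw [hcu, Complex.ofReal_re]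
    rw [key]
    apply mu_mono hμ _ _ (fun x => by simp) hb
    intro x
    simp only [reUCb_apply, Complex.ofReal_re]
    calc ((c • u : UCb X).1 x).re ≤ ‖(c • u : UCb X).1 x‖ := Complex.re_le_norm _
      _ = ‖c‖ * ‖u.1 x‖ := by
          simp [smul_eq_mul, map_mul]
      _ = ‖u.1 x‖ := by rw [hcn, one_mul]
      _ ≤ (b.1 x).re := hub x


lemma exp_diff_bound (a b t : ℝ) (ht : 0 < t) :
    ‖Complex.exp (↑a * Complex.I) - Complex.exp (↑b * Complex.I)‖ ≤
      (2*t)⁻¹ * (1 - Real.cos (a - b)) + t := by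
  have hfac : Complex.exp (↑a * Complex.I) - Complex.exp (↑b * Complex.I)
      = Complex.exp (↑b * Complex.I) * (Complex.exp ((↑(a - b)) * Complex.I) - 1) := by
    rw [mul_sub, mul_one, ← Complex.exp_add]
    push_cast
    ring_nf
  rw [hfac, norm_mul, Complex.norm_exp_ofReal_mul_I, one_mul]
  set c := Real.cos (a - b) with hc
  have hc1 : c ≤ 1 := Real.cos_le_one _
  have hA2 : ‖Complex.exp ((↑(a - b)) * Complex.I) - 1‖ ^ 2 = 2 - 2 * c := by
    rw [Complex.sq_norm, Complex.normSq_apply]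
    simp only [Complex.sub_re, Complex.sub_im, Complex.exp_ofReal_mul_I_re,
      Complex.exp_ofReal_mul_I_im, Complex.one_re, Complex.one_im, sub_zero]
    nlinarith [Real.sin_sq_add_cos_sq (a - b)]
  set A := ‖Complex.exp ((↑(a - b)) * Complex.I) - 1‖ with hAdef
  have hA : 0 ≤ A := norm_nonneg _
  have hB : 0 ≤ (2*t)⁻¹ * (1 - c) + t := by
    have : (0:ℝ) ≤ (2*t)⁻¹ * (1 - c) := mul_nonneg (by positivity) (by linarith)
    linarith
  have hsq : A^2 ≤ ((2*t)⁻¹ * (1 - c) + t)^2 := by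
    rw [hA2]
    have expand : ((2*t)⁻¹ * (1 - c) + t)^2 - (2 - 2*c) = ((2*t)⁻¹ * (1 - c) - t)^2 := by
      field_simp
      ring
    nlinarith [sq_nonneg ((2*t)⁻¹ * (1 - c) - t)]
  calc A = Real.sqrt (A^2) := (Real.sqrt_sq hA).symm
    _ ≤ Real.sqrt (((2*t)⁻¹ * (1 - c) + t)^2) := Real.sqrt_le_sqrt hsq
    _ = _ := Real.sqrt_sq hB

lemma key_estimate (hμ : IsPositiveFunctional μ) (f g : UCdual X) (t : ℝ) (ht : 0 < t) :
    ‖μ (expICf f.2) - μ (expICf g.2)‖ ≤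
      (2*t)⁻¹ * ((μ oneUCb).re - (μ (expICf (f.2.sub g.2))).re) + t * (μ oneUCb).re := by
  have hh : UniformContinuous (f.1 - g.1) := f.2.sub g.2
  set b : UCb X := ((2*t)⁻¹ : ℂ) • ((oneUCb : UCb X) - reUCb (expICf hh)) + (t : ℂ) • oneUCb
    with hbdef
  have hbx : ∀ x, b.1 x = (((2*t)⁻¹ * (1 - Real.cos (f.1 x - g.1 x)) + t : ℝ) : ℂ) := by
    intro x
    simp only [hbdef, Submodule.coe_add, Submodule.coe_smul_of_tower, Submodule.coe_sub,
      BoundedContinuousFunction.coe_add, Pi.add_apply, BoundedContinuousFunction.coe_smul,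
      Pi.smul_apply, BoundedContinuousFunction.coe_sub, Pi.sub_apply, reUCb_apply,
      oneUCb_apply, expICf_apply, smul_eq_mul, Pi.sub_apply]
    rw [Complex.exp_ofReal_mul_I_re]
    push_cast
    ring
  have hbim : ∀ x, (b.1 x).im = 0 := fun x => by rw [hbx x]; exact Complex.ofReal_im _
  have hbre : ∀ x, (b.1 x).re = (2*t)⁻¹ * (1 - Real.cos (f.1 x - g.1 x)) + t :=
    fun x => by rw [hbx x]; exact Complex.ofReal_re _
  have hub : ∀ x, ‖(expICf f.2 - expICf g.2 : UCb X).1 x‖ ≤ (b.1 x).re := by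
    intro x
    rw [hbre x]
    have hval : ((expICf f.2 - expICf g.2 : UCb X).1 x)
        = Complex.exp (↑(f.1 x) * Complex.I) - Complex.exp (↑(g.1 x) * Complex.I) := by
      simp
    rw [hval]
    exact exp_diff_bound _ _ t ht
  have hmain := mu_norm_le hμ (expICf f.2 - expICf g.2) b hbim hub
  rw [map_sub] at hmain
  refine hmain.trans (le_of_eq ?_)
  have h1 : μ b = ((2*t)⁻¹ : ℂ) * (μ (oneUCb : UCb X) - μ (reUCb (expICf hh)))
      + (t : ℂ) * μ (oneUCb : UCb X) := by
    simp [hbdef, map_add, map_smul, map_sub, smul_eq_mul]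
  have h2 : (μ (reUCb (expICf hh))).re = (μ (expICf hh)).re := (mu_re_eq hμ _).symm
  have him1 : (μ (oneUCb : UCb X)).im = 0 :=
    (mu_nonneg hμ (oneUCb : UCb X) (fun x => by simp)).2
  have him2 : (μ (reUCb (expICf hh))).im = 0 := mu_real hμ _ (fun x => by simp)
  rw [h1]
  have heq : expICf (f.2.sub g.2) = expICf hh := rfl
  rw [heq]
  have h2t : ((2 * (t:ℂ))⁻¹).re = (2*t)⁻¹ := by
    rw [show (2*(t:ℂ)) = ((2*t : ℝ) : ℂ) by push_cast; ring, ← Complex.ofReal_inv,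
      Complex.ofReal_re]
  have h2t' : ((2 * (t:ℂ))⁻¹).im = 0 := by
    rw [show (2*(t:ℂ)) = ((2*t : ℝ) : ℂ) by push_cast; ring, ← Complex.ofReal_inv,
      Complex.ofReal_im]
  simp only [Complex.add_re, Complex.mul_re, Complex.sub_re, Complex.sub_im,
    Complex.ofReal_re, Complex.ofReal_im, him1, him2, h2, h2t, h2t', zero_mul, sub_zero,
    zero_sub, mul_zero, neg_zero, add_zero, zero_add]

end Aux

/-- For a positive functional `μ ∈ M⁺(X)`, the Fourier transform
`Fμ : X^∇ → ℂ`, `(Fμ)(f) = ⟨μ, e^{if}⟩`, is a bounded uniformly continuous function on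
`X^∇` if and only if its real part is continuous at `0 ∈ X^∇`. -/
theorem fourier_uniformContinuous_iff_re_continuousAt_zero
    {X : Type*} [UniformSpace X] [T2Space X]
    (μ : UCb X →L[ℂ] ℂ) (hμ : IsPositiveFunctional μ) :
    (UniformContinuous (fun f : UCdual X => μ (expICf f.2)) ∧
      ∃ C : ℝ, ∀ f : UCdual X, ‖μ (expICf f.2)‖ ≤ C) ↔
    ContinuousAt (fun f : UCdual X => (μ (expICf f.2)).re)
      (⟨fun _ => 0, uniformContinuous_const⟩ : UCdual X) := by
  constructor
  · rintro ⟨hUC, -⟩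
    exact (Complex.continuous_re.comp hUC.continuous).continuousAt
  · intro h0
    have hμ1 := mu_nonneg hμ (oneUCb : UCb X) (fun x => by simp)
    set μ1 := (μ (oneUCb : UCb X)).re with hμ1def
    have hμ1nn : 0 ≤ μ1 := hμ1.1
    set z : UCdual X := ⟨fun _ => 0, uniformContinuous_const⟩ with hz
    set G : UCdual X → ℂ := fun f => μ (expICf f.2) with hG
    have hG0 : G z = μ (oneUCb : UCb X) := by
      have he : expICf (z.2) = (oneUCb : UCb X) := by
        apply Subtype.ext
        apply BoundedContinuousFunction.ext
        intro x
        simp [expICf, oneUCb, hz]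
      simp only [hG, he]
    constructor
    · -- uniform continuity
      set D : UCdual X × UCdual X → UCdual X :=
        fun p => ⟨p.1.1 - p.2.1, p.1.2.sub p.2.2⟩ with hD
      have hU : uniformity (UCdual X)
          = Filter.comap (fun q : UCdual X × UCdual X => ((q.1.1 : X → ℝ), (q.2.1 : X → ℝ)))
            (uniformity (X → ℝ)) := uniformity_subtype
      have hsub : Filter.Tendsto (fun q : (X → ℝ) × (X → ℝ) => q.1 - q.2)
          (uniformity (X → ℝ)) (nhds 0) := by
        rw [uniformity_eq_comap_nhds_zero_swapped]
        exact Filter.tendsto_comap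
      have hD' : Filter.Tendsto (fun p : UCdual X × UCdual X => (p.1.1 : X → ℝ) - p.2.1)
          (uniformity (UCdual X)) (nhds (0 : X → ℝ)) := by
        rw [hU]
        exact hsub.comp Filter.tendsto_comap
      have hN : nhds z = Filter.comap (Subtype.val) (nhds (0 : X → ℝ)) :=
        nhds_subtype _ _
      have hDt : Filter.Tendsto D (uniformity (UCdual X)) (nhds z) := by
        rw [hN]; refine Filter.tendsto_comap_iff.mpr ?_
        exact hD'
      have htendsto : Filter.Tendsto (fun p : UCdual X × UCdual X => (G (D p)).re)
          (uniformity (UCdual X)) (nhds μ1) := by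
        have h0' : Filter.Tendsto (fun f : UCdual X => (G f).re) (nhds z) (nhds μ1) := by
          have : (G z).re = μ1 := by rw [hG0]
          rw [← this]
          exact h0
        exact h0'.comp hDt
      rw [UniformContinuous, Metric.uniformity_basis_dist.tendsto_right_iff]
      intro ε hε
      set t : ℝ := ε / (2 * (μ1 + 1)) with ht'
      have htpos : 0 < t := by positivity
      have hev : ∀ᶠ p in uniformity (UCdual X), |(G (D p)).re - μ1| < t * ε := by
        have := Metric.tendsto_nhds.mp htendsto (t * ε) (by positivity)
        simpa [Real.dist_eq] using this
      filter_upwards [hev] with p hp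
      have hkey := key_estimate hμ p.1 p.2 t htpos
      have h5 : μ1 - (G (D p)).re < t * ε := by
        have := abs_lt.mp hp
        linarith [this.1]
      have h2tinv : (0:ℝ) < (2*t)⁻¹ := by positivity
      have h6 : (2*t)⁻¹ * (t*ε) = ε/2 := by
        field_simp
      have h8 : t * (μ1 + 1) = ε/2 := by
        rw [ht']
        field_simp
      have h7 : t * μ1 < ε/2 := by nlinarith
      have hlt : (2*t)⁻¹ * (μ1 - (G (D p)).re) < (2*t)⁻¹ * (t*ε) :=
        mul_lt_mul_of_pos_left h5 h2tinv
      show dist (G p.1) (G p.2) < ε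
      calc dist (G p.1) (G p.2) = ‖G p.1 - G p.2‖ := dist_eq_norm _ _
        _ ≤ (2*t)⁻¹ * (μ1 - (G (D p)).re) + t * μ1 := hkey
        _ < (2*t)⁻¹ * (t*ε) + t * μ1 := by linarith
        _ < ε := by rw [h6]; linarith
    · -- boundedness
      refine ⟨‖μ‖, fun f => ?_⟩
      have h1 : ‖μ (expICf f.2)‖ ≤ ‖μ‖ * ‖expICf f.2‖ := μ.le_opNorm _
      have h2 : ‖expICf f.2‖ ≤ 1 := by
        show ‖(expICf f.2).1‖ ≤ 1
        apply BoundedContinuousFunction.norm_le (by norm_num) |>.mpr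
        intro x
        simp [expICf, Complex.norm_exp_ofReal_mul_I]
      calc ‖μ (expICf f.2)‖ ≤ ‖μ‖ * ‖expICf f.2‖ := h1
        _ ≤ ‖μ‖ * 1 := by
            exact mul_le_mul_of_nonneg_left h2 (norm_nonneg μ)
        _ = ‖μ‖ := mul_one _

end
end
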